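/- Define μ_i ∈ 𝒟'(𝕋) for 1 ≤ i ≤ 2m−1 by μ̂_i(k) = conj(μ̂_i(−k)) = conj(λ)^k ∑_{l=0}^{i-1} (−1)^{i-1-l} C(i−1,l) C(l, m−1) C(l+k, m−1) for k ≥ 0, where λ ∈ 𝕋 and m ≥ 1. Then μ_i = 0 for 1 ≤ i ≤ m−1, the Fourier coefficients of μ_i for m ≤ i ≤ 2m−2 satisfy μ̂_i(k) = C(i−1, m−1) · (∏_{j=i+1−m}^{m−1} (k+j)) / (2m−1−i)! · conj(λ)^k, and μ̂_{2m−1}(k) = C(2m−2, m−1) conj(λ)^k for all k ≥ 0. -/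

import Mathlib

open Complex Finset

/-- Fourier coefficient `μ̂_i(k)` of the distribution `μ_i` from (eq:H(b)=Dvecmu) with
`p = 1` (i.e. `c_0 = 1`, higher coefficients zero). -/
noncomputable def muHat (m : ℕ) (lam : ℂ) (i k : ℕ) : ℂ :=
  (starRingEnd ℂ lam) ^ k *
    ∑ l ∈ Finset.range i,
      (-1 : ℂ) ^ (i - 1 - l) * (Nat.choose (i - 1) l : ℂ) *
        (Nat.choose l (m - 1) : ℂ) * (Nat.choose (l + k) (m - 1) : ℂ)


lemma key : ∀ (n r a : ℕ), n ≤ r →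
    ∑ t ∈ range (n+1), (-1:ℂ)^t * (n.choose t) * ((t+a).choose r)
      = (-1)^n * (a.choose (r-n)) := by
  intro n
  induction n with
  | zero => intro r a _; simp
  | succ n ih =>
    intro r a hnr
    have hn : n ≤ r := by omega
    have IH := ih r (a+1) hn
    have hfull := ih r a hn
    rw [Finset.sum_range_succ'] at hfull
    rw [Finset.sum_range_succ']
    have hsplit : ∀ t, ((n+1).choose (t+1) : ℂ) = (n.choose t : ℂ) + (n.choose (t+1) : ℂ) := by
      intro t; push_cast [Nat.choose_succ_succ]; ring
    have e1 : ∑ t ∈ range (n+1), (-1:ℂ)^(t+1) * ((n+1).choose (t+1)) * ((t+1+a).choose r)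
        = -(∑ t ∈ range (n+1), (-1:ℂ)^t * (n.choose t) * ((t+(a+1)).choose r))
          - ∑ t ∈ range (n+1), (-1:ℂ)^t * (n.choose (t+1)) * ((t+1+a).choose r) := by
      rw [← Finset.sum_neg_distrib, ← Finset.sum_sub_distrib]
      apply Finset.sum_congr rfl
      intro t _
      have : t + 1 + a = t + (a+1) := by omega
      rw [hsplit t, this]; ring
    -- second auxiliary sum: last term vanishes
    have e2 : ∑ t ∈ range (n+1), (-1:ℂ)^t * (n.choose (t+1)) * ((t+1+a).choose r)
        = ∑ t ∈ range n, (-1:ℂ)^(t+1) * (n.choose (t+1)) * ((t+1+a).choose r)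
          * (-1:ℂ) := by
      rw [Finset.sum_range_succ, Nat.choose_succ_self]
      push_cast
      rw [mul_zero, zero_mul, add_zero]
      apply Finset.sum_congr rfl
      intro t _; ring
    have e2' : ∑ t ∈ range (n+1), (-1:ℂ)^t * (n.choose (t+1)) * ((t+1+a).choose r)
        = -((-1:ℂ)^n * (a.choose (r-n)) - (a.choose r)) := by
      rw [e2]
      rw [← Finset.sum_mul]
      have : (∑ t ∈ range n, (-1:ℂ)^(t+1) * (n.choose (t+1)) * ((t+1+a).choose r))
          = (-1:ℂ)^n * (a.choose (r-n)) - (n.choose 0) * ((0+a).choose r) := by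
        rw [← hfull]; ring
      rw [this]; push_cast [Nat.choose_zero_right]; ring
    rw [e1, e2', IH]
    -- Pascal on the RHS
    have hr : r - n = (r - (n+1)) + 1 := by omega
    have pascal : ((a+1).choose (r-n) : ℂ) = (a.choose (r-(n+1)) : ℂ) + (a.choose (r-n) : ℂ) := by
      rw [hr]; push_cast [Nat.choose_succ_succ]; ring
    rw [pascal]
    push_cast [Nat.choose_zero_right]
    ring_nf

lemma natprod (M n k : ℕ) (hn : n ≤ M) :
    Nat.factorial (M - n) * (M + k).choose (M - n) = ∏ j ∈ Icc (n+1) M, (k + j) := by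
  rw [← Nat.descFactorial_eq_factorial_mul_choose, Nat.descFactorial_eq_prod_range]
  rw [show Icc (n+1) M = Ico (n+1) (M+1) by rfl, Finset.prod_Ico_eq_prod_range]
  rw [show M + 1 - (n+1) = M - n by omega]
  rw [← Finset.prod_range_reflect]
  apply Finset.prod_congr rfl
  intro j hj
  rw [Finset.mem_range] at hj
  omega

lemma mainHat (m : ℕ) (hm : 1 ≤ m) (lam : ℂ) (i k : ℕ) (hi1 : m ≤ i) (hi2 : i ≤ 2*m-1) :
    muHat m lam i k
      = (Nat.choose (i - 1) (m - 1) : ℂ) *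
          (∏ j ∈ Finset.Icc (i + 1 - m) (m - 1), ((k : ℂ) + (j : ℂ))) /
          (Nat.factorial (2 * m - 1 - i) : ℂ) * (starRingEnd ℂ lam) ^ k := by
  set n := i - m with hn
  have hnm : n ≤ m - 1 := by omega
  have sq : ∀ e : ℕ, (-1:ℂ)^e * (-1)^e = 1 := by
    intro e; rw [← pow_add, ← two_mul, pow_mul]; norm_num
  have sign : ∀ l, l ≤ i-1 → (-1:ℂ)^(i-1-l) = (-1)^(i-1) * (-1)^l := by
    intro l hl
    have h1 : (-1:ℂ)^(i-1-l) * ((-1)^l * (-1)^l) = (-1)^(i-1) * (-1)^l := by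
      rw [← mul_assoc, ← pow_add, show i-1-l+l = i-1 by omega]
    rw [sq l, mul_one] at h1
    exact h1
  have hS : (∑ l ∈ Finset.range i,
      (-1 : ℂ) ^ (i - 1 - l) * (Nat.choose (i - 1) l : ℂ) *
        (Nat.choose l (m - 1) : ℂ) * (Nat.choose (l + k) (m - 1) : ℂ))
      = (-1:ℂ)^(i-1) * ∑ l ∈ Finset.range i,
      (-1 : ℂ) ^ l * (Nat.choose (i - 1) l : ℂ) *
        (Nat.choose l (m - 1) : ℂ) * (Nat.choose (l + k) (m - 1) : ℂ) := by
    rw [Finset.mul_sum]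
    apply Finset.sum_congr rfl
    intro l hl
    rw [Finset.mem_range] at hl
    rw [sign l (by omega)]; ring
  have hsplit : (∑ l ∈ Finset.range i,
      (-1 : ℂ) ^ l * (Nat.choose (i - 1) l : ℂ) *
        (Nat.choose l (m - 1) : ℂ) * (Nat.choose (l + k) (m - 1) : ℂ))
      = ∑ t ∈ Finset.range (n+1),
      (-1 : ℂ) ^ ((m-1)+t) * (Nat.choose (i - 1) ((m-1)+t) : ℂ) *
        (Nat.choose ((m-1)+t) (m - 1) : ℂ) * (Nat.choose ((m-1)+t + k) (m - 1) : ℂ) := by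
    rw [show Finset.range i = Finset.range ((m-1)+(n+1)) by
      rw [show i = (m-1)+(n+1) by omega], Finset.sum_range_add]
    rw [show (∑ l ∈ Finset.range (m-1),
      (-1 : ℂ) ^ l * (Nat.choose (i - 1) l : ℂ) *
        (Nat.choose l (m - 1) : ℂ) * (Nat.choose (l + k) (m - 1) : ℂ)) = 0 from
      Finset.sum_eq_zero (by
        intro l hl
        rw [Finset.mem_range] at hl
        rw [Nat.choose_eq_zero_of_lt (by omega : l < m-1)]
        push_cast; ring), zero_add]
  have hterm : ∀ t, t ≤ n →
      ((Nat.choose (i - 1) ((m-1)+t) : ℂ) * (Nat.choose ((m-1)+t) (m - 1) : ℂ))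
        = (Nat.choose (i-1) (m-1) : ℂ) * (Nat.choose n t : ℂ) := by
    intro t ht
    have := Nat.choose_mul (n := i-1) (k := (m-1)+t) (s := m-1)
      (by omega)
    rw [show (i-1) - (m-1) = n by omega, show ((m-1)+t) - (m-1) = t by omega] at this
    exact_mod_cast congrArg (Nat.cast : ℕ → ℂ) this
  have hkey := key n (m-1) ((m-1)+k) hnm
  have hsum3 : (∑ t ∈ Finset.range (n+1),
      (-1 : ℂ) ^ ((m-1)+t) * (Nat.choose (i - 1) ((m-1)+t) : ℂ) *
        (Nat.choose ((m-1)+t) (m - 1) : ℂ) * (Nat.choose ((m-1)+t + k) (m - 1) : ℂ))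
      = (-1:ℂ)^(m-1) * (Nat.choose (i-1) (m-1) : ℂ) * ((-1)^n * (Nat.choose ((m-1)+k) (m-1-n) : ℂ)) := by
    rw [← hkey, Finset.mul_sum]
    apply Finset.sum_congr rfl
    intro t ht
    rw [Finset.mem_range] at ht
    rw [pow_add]
    rw [show (m-1)+t+k = t+((m-1)+k) by omega]
    have := hterm t (by omega)
    calc (-1:ℂ)^(m-1) * (-1)^t * (Nat.choose (i - 1) ((m-1)+t) : ℂ) *
        (Nat.choose ((m-1)+t) (m - 1) : ℂ) * (Nat.choose (t+((m-1)+k)) (m - 1) : ℂ)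
        = (-1:ℂ)^(m-1) * (-1)^t * ((Nat.choose (i - 1) ((m-1)+t) : ℂ) *
        (Nat.choose ((m-1)+t) (m - 1) : ℂ)) * (Nat.choose (t+((m-1)+k)) (m - 1) : ℂ) := by ring
      _ = _ := by rw [this]; ring
  -- assemble
  unfold muHat
  rw [hS, hsplit, hsum3]
  have hsign : (-1:ℂ)^(i-1) * ((-1:ℂ)^(m-1) * (-1)^n) = 1 := by
    rw [show i - 1 = (m-1)+n by omega, pow_add]
    calc (-1:ℂ)^(m-1) * (-1)^n * ((-1)^(m-1) * (-1)^n)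
        = ((-1:ℂ)^(m-1) * (-1)^(m-1)) * ((-1)^n * (-1)^n) := by ring
      _ = 1 := by rw [sq, sq, mul_one]
  have hprod := natprod (m-1) n k hnm
  have hprodC : (Nat.factorial (m-1-n) : ℂ) * (Nat.choose ((m-1)+k) (m-1-n) : ℂ)
      = ∏ j ∈ Finset.Icc (n+1) (m-1), ((k:ℂ) + (j:ℂ)) := by
    have := congrArg (Nat.cast : ℕ → ℂ) hprod
    push_cast at this
    exact this
  rw [show i + 1 - m = n + 1 by omega, show 2*m-1-i = m-1-n by omega]
  have hfac : (Nat.factorial (m-1-n) : ℂ) ≠ 0 := by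
    exact_mod_cast Nat.factorial_ne_zero _
  rw [← hprodC]
  field_simp
  linear_combination ((starRingEnd ℂ) lam ^ k * (Nat.choose (i-1) (m-1) : ℂ) * (Nat.choose ((m-1)+k) (m-1-n) : ℂ)) * hsign

theorem stmt18 (m : ℕ) (hm : 1 ≤ m) (lam : ℂ) (hlam : ‖lam‖ = 1) :
    -- `μ_i = 0` for `1 ≤ i ≤ m−1`
    (∀ i : ℕ, 1 ≤ i → i ≤ m - 1 → ∀ k : ℕ, muHat m lam i k = 0) ∧
    -- for `m ≤ i ≤ 2m−2`
    (∀ i : ℕ, m ≤ i → i ≤ 2 * m - 2 → ∀ k : ℕ,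
      muHat m lam i k
        = (Nat.choose (i - 1) (m - 1) : ℂ) *
            (∏ j ∈ Finset.Icc (i + 1 - m) (m - 1), ((k : ℂ) + (j : ℂ))) /
            (Nat.factorial (2 * m - 1 - i) : ℂ) * (starRingEnd ℂ lam) ^ k) ∧
    -- `μ_{2m−1} = C(2m−2, m−1) δ_λ`
    (∀ k : ℕ, muHat m lam (2 * m - 1) k
      = (Nat.choose (2 * m - 2) (m - 1) : ℂ) * (starRingEnd ℂ lam) ^ k) := by
  refine ⟨?_, ?_, ?_⟩
  · intro i hi1 hi2 k
    unfold muHat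
    rw [Finset.sum_eq_zero, mul_zero]
    intro l hl
    rw [Finset.mem_range] at hl
    rw [Nat.choose_eq_zero_of_lt (by omega : l < m - 1)]
    push_cast; ring
  · intro i hi1 hi2 k
    exact mainHat m hm lam i k hi1 (by omega)
  · intro k
    rw [mainHat m hm lam (2*m-1) k (by omega) le_rfl]
    rw [show 2*m-1+1-m = m by omega, show 2*m-1-(2*m-1) = 0 by omega,
      show 2*m-1-1 = 2*m-2 by omega,
      Finset.Icc_eq_empty (by omega : ¬ m ≤ m - 1), Finset.prod_empty,
      Nat.factorial_zero]
    push_cast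
    ring
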